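/- Suppose (I,<) forms a set of tight indiscernibles generating M* over M, where I is order-isomorphic to (ℕ,<). For each n ∈ ℕ let Mₙ be the elementary submodel of M* generated by M ∪ {i ∈ I : i ≥ n}. Then each Mₙ₊₁ is a proper elementary submodel of Mₙ, and the intersection of all the Mₙ equals M. -/

import Mathlib

open FirstOrder Language

/-- `f : N^k → N` is parametrically definable (over the parameter set `A`). -/
def ParamDefFun (L : Language) {N : Type*} [L.Structure N] (A : Set N) (k : ℕ)
    (f : (Fin k → N) → N) : Prop :=
  Set.Definable A L {x : Fin (k + 1) → N | x (Fin.last k) = f (fun i => x i.castSucc)}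

/-- `(ι,<)`, presented by `e : ι → N`, is a set of order indiscernibles over the
parameter set `A`: any two increasing tuples satisfy the same formulas with
parameters from `A`. -/
def OrderIndisc (L : Language) {N : Type*} [L.Structure N] (A : Set N)
    {ι : Type*} [LinearOrder ι] (e : ι → N) : Prop :=
  ∀ (k : ℕ) (φ : (L[[↥A]]).Formula (Fin k)) (i j : Fin k → ι),
    StrictMono i → StrictMono j → (φ.Realize (e ∘ i) ↔ φ.Realize (e ∘ j))

/-- Property (2) of tight indiscernibles: `N` is generated over `A` by the image of `e`,
via parametrically `A`-definable functions applied to increasing tuples. -/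
def GeneratedBy (L : Language) {N : Type*} [L.Structure N] (A : Set N)
    {ι : Type*} [LinearOrder ι] (e : ι → N) : Prop :=
  ∀ a : N, ∃ (k : ℕ) (f : (Fin k → N) → N), ParamDefFun L A k f ∧
    ∃ i : Fin k → ι, StrictMono i ∧ f (e ∘ i) = a

/-- Property (3) of tight indiscernibles: if a parametrically `A`-definable function takes
the same value at two increasing tuples, the second lying entirely above the first, then
that common value lies in `A`. -/
def TightProp (L : Language) {N : Type*} [L.Structure N] (A : Set N)
    {ι : Type*} [LinearOrder ι] (e : ι → N) : Prop :=
  ∀ (k : ℕ) (f : (Fin k → N) → N), ParamDefFun L A k f →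
    ∀ i j : Fin k → ι, StrictMono i → StrictMono j → (∀ a b, i a < j b) →
      f (e ∘ i) = f (e ∘ j) → f (e ∘ i) ∈ A

/-- `A` has definable Skolem functions (realized in `N`). -/
def HasDefSkolem (L : Language) {N : Type*} [L.Structure N] (A : Set N) : Prop :=
  ∀ (n : ℕ) (φ : (L[[↥A]]).Formula (Fin (n + 1))), ∃ f : (Fin n → N) → N,
    ParamDefFun L A n f ∧
      ∀ x : Fin n → N, (∃ b, φ.Realize (Fin.snoc x b)) → φ.Realize (Fin.snoc x (f x))


/-- The submodel of `N` generated by `A` together with `{e i : i ∈ T}`: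
all values of parametrically `A`-definable functions at increasing tuples from `T`,
together with `A`. -/
def genSet (L : Language) {N : Type*} [L.Structure N] (A : Set N)
    {ι : Type*} [LinearOrder ι] (e : ι → N) (T : Set ι) : Set N :=
  A ∪ {a | ∃ (k : ℕ) (f : (Fin k → N) → N), ParamDefFun L A k f ∧
    ∃ i : Fin k → ι, StrictMono i ∧ (∀ t, i t ∈ T) ∧ f (e ∘ i) = a}

namespace Stmt13Aux

open Set


variable {L : Language} {N : Type*} [L.Structure N] {A : Set N}

lemma paramdef_proj : ParamDefFun L A 1 (fun x => x 0) := by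
  refine ⟨Term.equal (Term.var (Fin.last 1)) (Term.var 0), ?_⟩
  ext x
  simp [Formula.realize_equal]

lemma paramdef_const {a : N} (ha : a ∈ A) : ParamDefFun L A 0 (fun _ => a) := by
  refine ⟨Term.equal (Term.var 0) (Constants.term (L.con (⟨a, ha⟩ : A))), ?_⟩
  ext x
  simp [Formula.realize_equal, Fin.last]

lemma paramdef_comp {m K : ℕ} {g : (Fin m → N) → N} (hg : ParamDefFun L A m g)
    {k : Fin m → ℕ} {f : ∀ t, (Fin (k t) → N) → N}
    (hf : ∀ t, ParamDefFun L A (k t) (f t)) (σ : ∀ t, Fin (k t) → Fin K) :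
    ParamDefFun L A K (fun y => g (fun t => f t (y ∘ σ t))) := by
  classical
  have hP : ∀ t : Fin m, A.Definable L
      {z : Fin (K+1) ⊕ Fin m → N |
        z (Sum.inr t) = f t (fun s => z (Sum.inl ((σ t s).castSucc)))} := by
    intro t
    have h := (hf t).preimage_comp
      (Fin.snoc (fun s => Sum.inl ((σ t s).castSucc)) (Sum.inr t))
    convert h using 1
    ext z
    simp [Set.mem_preimage, Function.comp]
  have hQ : A.Definable L
      {z : Fin (K+1) ⊕ Fin m → N |
        z (Sum.inl (Fin.last K)) = g (fun t => z (Sum.inr t))} := by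
    have h := hg.preimage_comp
      (Fin.snoc (fun t => Sum.inr t) (Sum.inl (Fin.last K)))
    convert h using 1
    ext z
    simp [Set.mem_preimage, Function.comp]
  have hD := (definable_biInter_finset hP Finset.univ).inter hQ
  have himg := hD.image_comp_embedding (⟨Sum.inl, Sum.inl_injective⟩ :
    Fin (K+1) ↪ Fin (K+1) ⊕ Fin m)
  show A.Definable L _
  convert himg using 1
  ext x
  constructor
  · intro hx
    refine ⟨Sum.elim x (fun t => f t (fun s => x ((σ t s).castSucc))), ⟨?_, ?_⟩, ?_⟩
    · rw [Set.mem_iInter₂]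
      intro t _
      rfl
    · exact hx
    · rfl
  · rintro ⟨z, ⟨hz1, hz2⟩, rfl⟩
    rw [Set.mem_iInter₂] at hz1
    show z (Sum.inl (Fin.last K)) = g _
    rw [hz2]
    congr 1
    funext t
    exact hz1 t (Finset.mem_univ t)

lemma paramdef_reindex {k K : ℕ} {f : (Fin k → N) → N} (hf : ParamDefFun L A k f)
    (σ : Fin k → Fin K) : ParamDefFun L A K (fun y => f (y ∘ σ)) :=
  paramdef_comp paramdef_proj (f := fun _ : Fin 1 => f) (fun _ => hf) (fun _ => σ)

lemma paramdef_eq_formula {K : ℕ} {G G' : (Fin K → N) → N}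
    (hG : ParamDefFun L A K G) (hG' : ParamDefFun L A K G') :
    ∃ φ : (L[[↥A]]).Formula (Fin K), ∀ w : Fin K → N, φ.Realize w ↔ G w = G' w := by
  classical
  have hP : A.Definable L
      {z : Fin K ⊕ Fin 1 → N | z (Sum.inr 0) = G (fun s => z (Sum.inl s))} := by
    have h := hG.preimage_comp
      (Fin.snoc (fun s => Sum.inl s) (Sum.inr (0 : Fin 1)))
    convert h using 1
    ext z
    simp [Set.mem_preimage, Function.comp]
  have hP' : A.Definable L
      {z : Fin K ⊕ Fin 1 → N | z (Sum.inr 0) = G' (fun s => z (Sum.inl s))} := by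
    have h := hG'.preimage_comp
      (Fin.snoc (fun s => Sum.inl s) (Sum.inr (0 : Fin 1)))
    convert h using 1
    ext z
    simp [Set.mem_preimage, Function.comp]
  obtain ⟨φ, hφ⟩ := (hP.inter hP').image_comp_embedding
    (⟨Sum.inl, Sum.inl_injective⟩ : Fin K ↪ Fin K ⊕ Fin 1)
  refine ⟨φ, fun w => ?_⟩
  refine Iff.trans (Set.ext_iff.1 hφ.symm w) ?_
  constructor
  · rintro ⟨z, ⟨hz1, hz2⟩, rfl⟩
    exact hz1.symm.trans hz2
  · intro h
    exact ⟨Sum.elim w (fun _ => G w), ⟨rfl, h⟩, rfl⟩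

lemma strictMono_append {k k' : ℕ} {i : Fin k → ℕ} {j : Fin k' → ℕ}
    (hi : StrictMono i) (hj : StrictMono j) (hij : ∀ a b, i a < j b) :
    StrictMono (Fin.append i j) := by
  intro a b hab
  revert hab
  refine Fin.addCases (fun a => ?_) (fun a => ?_) a <;>
    refine Fin.addCases (fun b => ?_) (fun b => ?_) b <;> intro hab
  · rw [Fin.append_left, Fin.append_left]
    refine hi ?_
    simp only [Fin.lt_def, Fin.coe_castAdd] at hab
    exact hab
  · rw [Fin.append_left, Fin.append_right]
    exact hij a b
  · exfalso
    simp only [Fin.lt_def, Fin.coe_natAdd, Fin.coe_castAdd] at hab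
    omega
  · rw [Fin.append_right, Fin.append_right]
    refine hj ?_
    simp only [Fin.lt_def, Fin.coe_natAdd] at hab
    exact Fin.lt_def.2 (by omega)



variable {L : Language} {N : Type*} [L.Structure N] {A : Set N}

lemma mem_genSet_iff {e : ℕ → N} {T : Set ℕ} {a : N} :
    a ∈ genSet L A e T ↔ ∃ (k : ℕ) (f : (Fin k → N) → N), ParamDefFun L A k f ∧
      ∃ i : Fin k → ℕ, StrictMono i ∧ (∀ t, i t ∈ T) ∧ f (e ∘ i) = a := by
  constructor
  · rintro (ha | h)
    · exact ⟨0, fun _ => a, paramdef_const ha, Fin.elim0,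
        by intro s; exact s.elim0, by intro s; exact s.elim0, rfl⟩
    · exact h
  · exact Or.inr

lemma genSet_closed {e : ℕ → N} {T : Set ℕ} {m : ℕ} {g : (Fin m → N) → N}
    (hg : ParamDefFun L A m g) {x : Fin m → N} (hx : ∀ t, x t ∈ genSet L A e T) :
    g x ∈ genSet L A e T := by
  classical
  choose k f hf i hmono hiT hval using fun t => (mem_genSet_iff.1 (hx t))
  set J : Finset ℕ := Finset.univ.biUnion (fun t => Finset.image (i t) Finset.univ) with hJ
  let jj : Fin J.card ≃o J := J.orderIsoOfFin rfl
  have hjmono : StrictMono (fun s : Fin J.card => (jj s : ℕ)) := by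
    intro a b h
    exact Subtype.coe_lt_coe.2 (jj.strictMono h)
  have hmemJ : ∀ t s, i t s ∈ J := by
    intro t s
    exact Finset.mem_biUnion.2 ⟨t, Finset.mem_univ t, Finset.mem_image_of_mem _ (Finset.mem_univ s)⟩
  set σ : ∀ t, Fin (k t) → Fin J.card := fun t s => jj.symm ⟨i t s, hmemJ t s⟩ with hσdef
  have hσ : ∀ t s, (jj (σ t s) : ℕ) = i t s := by
    intro t s
    rw [hσdef]
    simp
  refine mem_genSet_iff.2 ⟨J.card, fun y => g (fun t => f t (y ∘ σ t)),
    paramdef_comp hg hf σ, fun s => (jj s : ℕ), hjmono, ?_, ?_⟩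
  · intro s
    have hs : (jj s : ℕ) ∈ J := (jj s).2
    obtain ⟨t, -, hs2⟩ := Finset.mem_biUnion.1 hs
    obtain ⟨s', -, hs'⟩ := Finset.mem_image.1 hs2
    show (jj s : ℕ) ∈ T
    rw [← hs']
    exact hiT t s'
  · have : ∀ t, f t ((e ∘ fun s => (jj s : ℕ)) ∘ σ t) = x t := by
      intro t
      rw [← hval t]
      congr 1
      funext s
      simp only [Function.comp_apply, hσ]
    simp only [this]

lemma tight_two {e : ℕ → N} (hind : OrderIndisc L A e) (htight : TightProp L A e)
    {k k' : ℕ} {f : (Fin k → N) → N} {f' : (Fin k' → N) → N}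
    (hf : ParamDefFun L A k f) (hf' : ParamDefFun L A k' f')
    {i : Fin k → ℕ} {i' : Fin k' → ℕ} (hi : StrictMono i) (hi' : StrictMono i')
    (hcross : ∀ a b, i a < i' b) (heq : f (e ∘ i) = f' (e ∘ i')) :
    f' (e ∘ i') ∈ A := by
  classical
  set C : ℕ := (Finset.univ.sup i') + 1 with hCdef
  have hC : ∀ b, i' b < C := fun b => Nat.lt_succ_of_le (Finset.le_sup (Finset.mem_univ b))
  set i'' : Fin k' → ℕ := fun b => i' b + C with hi''def
  have hi''mono : StrictMono i'' := by
    intro a b h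
    have := hi' h
    simp only [hi''def]
    omega
  have hcross' : ∀ a b, i' a < i'' b := fun a b =>
    lt_of_lt_of_le (hC a) (Nat.le_add_left _ _)
  have hcross2 : ∀ a b, i a < i'' b := fun a b =>
    lt_of_lt_of_le (hcross a b) (Nat.le_add_right _ _)
  obtain ⟨φ, hφ⟩ := paramdef_eq_formula (paramdef_reindex hf (Fin.castAdd k'))
    (paramdef_reindex hf' (Fin.natAdd k))
  have c1 : (e ∘ Fin.append i i') ∘ Fin.castAdd k' = e ∘ i := by
    funext s; simp [Fin.append_left]
  have c2 : (e ∘ Fin.append i i') ∘ Fin.natAdd k = e ∘ i' := by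
    funext s; simp [Fin.append_right]
  have c1' : (e ∘ Fin.append i i'') ∘ Fin.castAdd k' = e ∘ i := by
    funext s; simp [Fin.append_left]
  have c2' : (e ∘ Fin.append i i'') ∘ Fin.natAdd k = e ∘ i'' := by
    funext s; simp [Fin.append_right]
  have hr1 : φ.Realize (e ∘ Fin.append i i') := by
    refine (hφ _).2 ?_
    show f ((e ∘ Fin.append i i') ∘ Fin.castAdd k') = f' ((e ∘ Fin.append i i') ∘ Fin.natAdd k)
    rw [c1, c2]
    exact heq
  have hr2 := (hind _ φ _ _ (strictMono_append hi hi' hcross)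
    (strictMono_append hi hi''mono hcross2)).1 hr1
  have hr2' : f ((e ∘ Fin.append i i'') ∘ Fin.castAdd k') =
      f' ((e ∘ Fin.append i i'') ∘ Fin.natAdd k) := (hφ _).1 hr2
  rw [c1', c2'] at hr2'
  exact htight k' f' hf' i' i'' hi' hi''mono hcross' (heq.symm.trans hr2')


end Stmt13Aux

open Stmt13Aux

/-- with tight indiscernibles of order type ℕ, the submodels Mₙ generated by
M ∪ {i ∈ I : i ≥ n} form a strictly decreasing elementary chain whose intersection is M.
(Elementarity of Mₙ₊₁ in Mₙ is rendered by the Tarski–Vaught condition, realization being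
computed in M*.) -/
theorem stmt_13 {L : Language} {N : Type*} [L.Structure N]
    (S : L.ElementarySubstructure N) (e : ℕ → N)
    (hinj : Function.Injective e) (hdisj : ∀ n : ℕ, e n ∉ S)
    (hskolem : HasDefSkolem L (S : Set N))
    (hind : OrderIndisc L (S : Set N) e)
    (hgen : GeneratedBy L (S : Set N) e)
    (htight : TightProp L (S : Set N) e) :
    (∀ n : ℕ,
      genSet L (S : Set N) e {i | n + 1 ≤ i} ⊂ genSet L (S : Set N) e {i | n ≤ i}) ∧
    (∀ (n m : ℕ) (φ : L.Formula (Fin (m + 1))) (x : Fin m → N),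
      (∀ t, x t ∈ genSet L (S : Set N) e {i | n + 1 ≤ i}) →
      (∃ b ∈ genSet L (S : Set N) e {i | n ≤ i}, φ.Realize (Fin.snoc x b)) →
      (∃ b ∈ genSet L (S : Set N) e {i | n + 1 ≤ i}, φ.Realize (Fin.snoc x b))) ∧
    (⋂ n : ℕ, genSet L (S : Set N) e {i | n ≤ i}) = (S : Set N) := by
  classical
  have hmono : ∀ n : ℕ,
      genSet L (S : Set N) e {i | n + 1 ≤ i} ⊆ genSet L (S : Set N) e {i | n ≤ i} := by
    intro n a ha
    rcases ha with ha | ⟨k, f, hf, i, h1, h2, h3⟩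
    · exact Or.inl ha
    · exact Or.inr ⟨k, f, hf, i, h1, fun t => Nat.le_of_succ_le (h2 t), h3⟩
  have hen : ∀ n, e n ∈ genSet L (S : Set N) e {i | n ≤ i} := fun n =>
    Or.inr ⟨1, fun x => x 0, paramdef_proj, fun _ => n,
      Subsingleton.strictMono _, fun _ => le_refl n, rfl⟩
  have hnotin : ∀ n, e n ∉ genSet L (S : Set N) e {i | n + 1 ≤ i} := by
    intro n h
    rcases h with h | ⟨k, f, hf, i, hmonoi, hiT, hval⟩
    · exact hdisj n h
    · set C : ℕ := (Finset.univ.sup i) + 1 with hCdef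
      have hCgt : ∀ b, i b < C := fun b =>
        Nat.lt_succ_of_le (Finset.le_sup (Finset.mem_univ b))
      set i2 : Fin k → ℕ := fun b => i b + C with hi2def
      have hmono2 : StrictMono i2 := by
        intro a b hab
        have := hmonoi hab
        simp only [hi2def]
        omega
      set i₀ : Fin 1 → ℕ := fun _ => n with hi₀def
      obtain ⟨φ, hφ⟩ := paramdef_eq_formula (paramdef_reindex hf (Fin.natAdd 1))
        (paramdef_reindex paramdef_proj (fun _ : Fin 1 => Fin.castAdd k (0 : Fin 1)))
      have happ1 : StrictMono (Fin.append i₀ i) :=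
        strictMono_append (Subsingleton.strictMono _) hmonoi
          (fun a b => lt_of_lt_of_le (Nat.lt_succ_self n) (hiT b))
      have happ2 : StrictMono (Fin.append i₀ i2) :=
        strictMono_append (Subsingleton.strictMono _) hmono2
          (fun a b => lt_of_lt_of_le (lt_of_lt_of_le (Nat.lt_succ_self n) (hiT b))
            (Nat.le_add_right _ _))
      have c1 : (e ∘ Fin.append i₀ i) ∘ Fin.natAdd 1 = e ∘ i := by
        funext s; simp [Fin.append_right]
      have c2 : (e ∘ Fin.append i₀ i) ((fun _ : Fin 1 => Fin.castAdd k (0 : Fin 1)) 0) = e n := by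
        simp [Fin.append_left, hi₀def]
      have c1' : (e ∘ Fin.append i₀ i2) ∘ Fin.natAdd 1 = e ∘ i2 := by
        funext s; simp [Fin.append_right]
      have c2' : (e ∘ Fin.append i₀ i2) ((fun _ : Fin 1 => Fin.castAdd k (0 : Fin 1)) 0) = e n := by
        simp [Fin.append_left, hi₀def]
      have hr1 : φ.Realize (e ∘ Fin.append i₀ i) := by
        refine (hφ _).2 ?_
        show f ((e ∘ Fin.append i₀ i) ∘ Fin.natAdd 1) =
          (e ∘ Fin.append i₀ i) ((fun _ : Fin 1 => Fin.castAdd k (0 : Fin 1)) 0)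
        rw [c1, c2, hval]
      have hr2 := (hind _ φ _ _ happ1 happ2).1 hr1
      have hr2' : f ((e ∘ Fin.append i₀ i2) ∘ Fin.natAdd 1) =
          (e ∘ Fin.append i₀ i2) ((fun _ : Fin 1 => Fin.castAdd k (0 : Fin 1)) 0) := (hφ _).1 hr2
      rw [c1', c2'] at hr2'
      have heq2 : f (e ∘ i) = f (e ∘ i2) := by rw [hval, hr2']
      have hmem := htight k f hf i i2 hmonoi hmono2
        (fun a b => lt_of_lt_of_le (hCgt a) (Nat.le_add_left _ _)) heq2
      rw [hval] at hmem
      exact hdisj n hmem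
  refine ⟨?_, ?_, ?_⟩
  · intro n
    rw [Set.ssubset_def]
    exact ⟨hmono n, fun hsub => hnotin n (hsub (hen n))⟩
  · intro n m φ x hx hb
    obtain ⟨b, _, hbreal⟩ := hb
    obtain ⟨g, hgdef, hgprop⟩ := hskolem m ((L.lhomWithConstants ↥(S : Set N)).onFormula φ)
    have hreal : ((L.lhomWithConstants ↥(S : Set N)).onFormula φ).Realize (Fin.snoc x (g x)) :=
      hgprop x ⟨b, (LHom.realize_onFormula _ _).2 hbreal⟩
    exact ⟨g x, genSet_closed hgdef hx, (LHom.realize_onFormula _ _).1 hreal⟩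
  · ext a
    simp only [Set.mem_iInter]
    constructor
    · intro ha
      rcases ha 0 with h | ⟨k, f, hf, i, hmonoi, _, hval⟩
      · exact h
      · rcases ha ((Finset.univ.sup i) + 1) with h | ⟨k', f', hf', i', hmono', hiT', hval'⟩
        · exact h
        · have hcross : ∀ a b, i a < i' b := fun a b =>
            lt_of_lt_of_le (Nat.lt_succ_of_le (Finset.le_sup (Finset.mem_univ a))) (hiT' b)
          have hA := tight_two hind htight hf hf' hmonoi hmono' hcross
            (hval.trans hval'.symm)
          rw [hval'] at hA
          exact hA
    · intro ha n
      exact Or.inl ha
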